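/- Let (f, p̂) be a classifier, bin a binning function, (x_1,y_1),…,(x_N,y_N) ∈ X × Y a finite dataset, φ : X → ℝ^d a feature map with d ≥ 1, and for γ > 0 let k_γ(x, x') = exp(−‖φ(x) − φ(x')‖_1 / (dγ)) be the Laplacian kernel. Fix x ∈ X with β(x) ≠ ∅, and define the recalibrated confidence p̂'_γ(x) = Σ_{i∈β(x)} k_γ(x, x_i) · 1[f(x_i)=y_i] / Σ_{i∈β(x)} k_γ(x, x_i). Suppose there is i* ∈ β(x) such that ‖φ(x) − φ(x_{i*})‖_1 < ‖φ(x) − φ(x_i)‖_1 for every i ∈ β(x) with i ≠ i*. Then p̂'_γ(x) → 1[f(x_{i*}) = y_{i*}] as γ → 0⁺, i.e., the recalibrated confidence converges to the accuracy at the nearest neighbor of x in feature space within its confidence bin. -/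

import Mathlib

open Filter

/-- Auxiliary: for `a > 0`, `exp (-a / (d * γ)) → 0` as `γ → 0⁺`. -/
lemma aux_exp_tendsto_zero (d : ℕ) (hd : 1 ≤ d) (a : ℝ) (ha : 0 < a) :
    Tendsto (fun γ : ℝ => Real.exp (-a / (d * γ))) (nhdsWithin 0 (Set.Ioi 0)) (nhds 0) := by
  have hd' : (0:ℝ) < d := by exact_mod_cast hd
  have h1 : Tendsto (fun γ : ℝ => γ⁻¹) (nhdsWithin 0 (Set.Ioi 0)) atTop :=
    tendsto_inv_nhdsGT_zero
  have h2 : Tendsto (fun γ : ℝ => -a / (d * γ)) (nhdsWithin 0 (Set.Ioi 0)) atBot := by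
    have hneg : -(a / (d:ℝ)) < 0 := neg_lt_zero.mpr (div_pos ha hd')
    have := Tendsto.neg_mul_atTop hneg (tendsto_const_nhds (α := ℝ)) h1
    refine this.congr fun γ => ?_
    rw [div_mul_eq_div_div]; ring
  exact Real.tendsto_exp_atBot.comp h2

theorem stmt_10 {X Y : Type*} [DecidableEq Y] (m : ℕ)
    (f : X → Y) (p : X → ℝ) (bin : ℝ → Fin m)
    (hp : ∀ x : X, 0 ≤ p x ∧ p x ≤ 1)
    (N : ℕ) (x : Fin N → X) (y : Fin N → Y)
    (d : ℕ) (hd : 1 ≤ d) (φ : X → (Fin d → ℝ))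
    (x₀ : X)
    (hβ : (Finset.univ.filter fun i : Fin N => bin (p (x i)) = bin (p x₀)).Nonempty)
    (istar : Fin N)
    (histar : istar ∈ Finset.univ.filter fun i : Fin N => bin (p (x i)) = bin (p x₀))
    (hnear : ∀ i ∈ Finset.univ.filter fun i : Fin N => bin (p (x i)) = bin (p x₀),
      i ≠ istar →
        (∑ j : Fin d, |φ x₀ j - φ (x istar) j|) < ∑ j : Fin d, |φ x₀ j - φ (x i) j|) :
    Tendsto
      (fun γ : ℝ =>
        (∑ i ∈ Finset.univ.filter fun i : Fin N => bin (p (x i)) = bin (p x₀),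
            Real.exp (-(∑ j : Fin d, |φ x₀ j - φ (x i) j|) / (d * γ)) *
              (if f (x i) = y i then (1:ℝ) else 0)) /
          ∑ i ∈ Finset.univ.filter fun i : Fin N => bin (p (x i)) = bin (p x₀),
            Real.exp (-(∑ j : Fin d, |φ x₀ j - φ (x i) j|) / (d * γ)))
      (nhdsWithin 0 (Set.Ioi 0))
      (nhds (if f (x istar) = y istar then (1:ℝ) else 0)) := by
  set B := Finset.univ.filter fun i : Fin N => bin (p (x i)) = bin (p x₀) with hB
  set D : Fin N → ℝ := fun i => ∑ j : Fin d, |φ x₀ j - φ (x i) j| with hD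
  set ind : Fin N → ℝ := fun i => if f (x i) = y i then (1:ℝ) else 0 with hind
  have hd' : (0:ℝ) < d := by exact_mod_cast hd
  -- per-term limit of the normalized weights
  have hterm : ∀ i ∈ B, Tendsto (fun γ : ℝ => Real.exp (-(D i - D istar) / (d * γ)))
      (nhdsWithin 0 (Set.Ioi 0)) (nhds (if i = istar then (1:ℝ) else 0)) := by
    intro i hi
    by_cases h : i = istar
    · subst h
      simp only [sub_self, neg_zero, zero_div, Real.exp_zero, if_pos rfl]
      exact tendsto_const_nhds
    · simp only [if_neg h]
      exact aux_exp_tendsto_zero d hd _ (sub_pos.mpr (hnear i hi h))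
  have hnum : Tendsto (fun γ : ℝ => ∑ i ∈ B, Real.exp (-(D i - D istar) / (d * γ)) * ind i)
      (nhdsWithin 0 (Set.Ioi 0)) (nhds (ind istar)) := by
    have := tendsto_finset_sum B (fun i hi => (hterm i hi).mul_const (ind i))
    have hsum : (∑ i ∈ B, (if i = istar then (1:ℝ) else 0) * ind i) = ind istar := by
      rw [Finset.sum_eq_single istar]
      · simp
      · intro b _ hb; simp [hb]
      · intro h; exact absurd histar h
    rwa [hsum] at this
  have hden : Tendsto (fun γ : ℝ => ∑ i ∈ B, Real.exp (-(D i - D istar) / (d * γ)))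
      (nhdsWithin 0 (Set.Ioi 0)) (nhds 1) := by
    have := tendsto_finset_sum B (fun i hi => hterm i hi)
    have hsum : (∑ i ∈ B, (if i = istar then (1:ℝ) else 0)) = 1 := by
      rw [Finset.sum_eq_single istar]
      · simp
      · intro b _ hb; simp [hb]
      · intro h; exact absurd histar h
    rwa [hsum] at this
  have hlim : Tendsto
      (fun γ : ℝ => (∑ i ∈ B, Real.exp (-(D i - D istar) / (d * γ)) * ind i) /
        ∑ i ∈ B, Real.exp (-(D i - D istar) / (d * γ)))
      (nhdsWithin 0 (Set.Ioi 0)) (nhds (ind istar)) := by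
    have h := hnum.div hden one_ne_zero; rw [div_one] at h; exact h
  refine hlim.congr' ?_
  filter_upwards [self_mem_nhdsWithin] with γ (hγ : 0 < γ)
  have hc : Real.exp (-(D istar) / (d * γ)) > 0 := Real.exp_pos _
  have key : ∀ i, Real.exp (-(D i) / (d * γ)) =
      Real.exp (-(D istar) / (d * γ)) * Real.exp (-(D i - D istar) / (d * γ)) := by
    intro i
    rw [← Real.exp_add]
    congr 1
    field_simp
    ring
  symm
  have e1 : (∑ i ∈ B, Real.exp (-(D i) / (d * γ)) * ind i) =
      Real.exp (-(D istar) / (d * γ)) * ∑ i ∈ B, Real.exp (-(D i - D istar) / (d * γ)) * ind i := by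
    rw [Finset.mul_sum]
    exact Finset.sum_congr rfl fun i _ => by rw [key i]; ring
  have e2 : (∑ i ∈ B, Real.exp (-(D i) / (d * γ))) =
      Real.exp (-(D istar) / (d * γ)) * ∑ i ∈ B, Real.exp (-(D i - D istar) / (d * γ)) := by
    rw [Finset.mul_sum]
    exact Finset.sum_congr rfl fun i _ => key i
  rw [e1, e2, mul_div_mul_left _ _ (ne_of_gt hc)]
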